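/- Let A be an almost disjoint family on ω such that the associated Isbell–Mrówka space Ψ(A) is k-starcompact for some k ≥ 2. Then A is a maximal almost disjoint family. -/

import Mathlib

open Set Filter Topology

/-- `𝒰` is an open cover of the space `X`. -/
def IsOpenCover {X : Type} [TopologicalSpace X] (𝒰 : Set (Set X)) : Prop :=
  (∀ u ∈ 𝒰, IsOpen u) ∧ ⋃₀ 𝒰 = Set.univ

/-- The star of a set `A` with respect to a collection `𝒰`. -/
def st {X : Type} (A : Set X) (𝒰 : Set (Set X)) : Set X :=
  ⋃₀ {u ∈ 𝒰 | (u ∩ A).Nonempty}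
/-- The `n`-fold iterated star `St^n(A,𝒰)`. -/
def iterSt {X : Type} : ℕ → Set X → Set (Set X) → Set X
  | 0, A, _ => A
  | n + 1, A, 𝒰 => st (iterSt n A 𝒰) 𝒰

/-- `𝒜` is an almost disjoint family of infinite subsets of `ℕ`. -/
def IsAlmostDisjointFamily (𝒜 : Set (Set ℕ)) : Prop :=
  (∀ a ∈ 𝒜, a.Infinite) ∧
    ∀ a ∈ 𝒜, ∀ b ∈ 𝒜, a ≠ b → (a ∩ b).Finite

/-- `𝒜` is a maximal almost disjoint family. -/
def IsMADFamily (𝒜 : Set (Set ℕ)) : Prop :=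
  IsAlmostDisjointFamily 𝒜 ∧
    ∀ B : Set ℕ, B.Infinite → ∃ a ∈ 𝒜, (B ∩ a).Infinite

/-- The topology of the Isbell–Mrówka space `Ψ(𝒜)` on `↥𝒜 ⊕ ℕ`: points of `ℕ`
are isolated and a set is open iff it almost contains `a` (as a set of naturals)
whenever it contains the point `a ∈ 𝒜`. -/
def psiTop (𝒜 : Set (Set ℕ)) : TopologicalSpace (↥𝒜 ⊕ ℕ) where
  IsOpen s := ∀ a : ↥𝒜, Sum.inl a ∈ s → {n ∈ (a : Set ℕ) | Sum.inr n ∉ s}.Finite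
  isOpen_univ := by intro a _; simp
  isOpen_inter := by
    intro s t hs ht a ha
    have : {n ∈ (a : Set ℕ) | Sum.inr n ∉ s ∩ t} ⊆
        {n ∈ (a : Set ℕ) | Sum.inr n ∉ s} ∪ {n ∈ (a : Set ℕ) | Sum.inr n ∉ t} := by
      intro n hn
      rcases hn with ⟨hna, hnst⟩
      by_cases hns : Sum.inr n ∈ s
      · exact Or.inr ⟨hna, fun hnt => hnst ⟨hns, hnt⟩⟩
      · exact Or.inl ⟨hna, hns⟩
    exact Set.Finite.subset ((hs a ha.1).union (ht a ha.2)) this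
  isOpen_sUnion := by
    intro S hS a ha
    rcases ha with ⟨s, hsS, has⟩
    have : {n ∈ (a : Set ℕ) | Sum.inr n ∉ ⋃₀ S} ⊆ {n ∈ (a : Set ℕ) | Sum.inr n ∉ s} := by
      intro n hn
      exact ⟨hn.1, fun hns => hn.2 ⟨s, hsS, hns⟩⟩
    exact Set.Finite.subset (hS s hsS a has) this

/-- `X` is `k`-starcompact. -/
def KStarCompact (X : Type) [TopologicalSpace X] (k : ℕ) : Prop :=
  ∀ 𝒰 : Set (Set X), IsOpenCover 𝒰 →
    ∃ 𝒲 ⊆ 𝒰, 𝒲.Finite ∧ iterSt k (⋃₀ 𝒲) 𝒰 = Set.univ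

/-- `X` is strongly `k`-starcompact. -/
def StronglyKStarCompact (X : Type) [TopologicalSpace X] (k : ℕ) : Prop :=
  ∀ 𝒰 : Set (Set X), IsOpenCover 𝒰 →
    ∃ F : Set X, F.Finite ∧ iterSt k F 𝒰 = Set.univ

theorem stmt (𝒜 : Set (Set ℕ)) (had : IsAlmostDisjointFamily 𝒜)
    (k : ℕ) (hk : 2 ≤ k)
    (h : @KStarCompact (↥𝒜 ⊕ ℕ) (psiTop 𝒜) k) :
    IsMADFamily 𝒜 := by
  refine ⟨had, ?_⟩
  intro B hB
  by_contra hcon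
  push_neg at hcon
  have hfin : ∀ a ∈ 𝒜, (B ∩ a).Finite := fun a ha => hcon a ha
  let V : ↥𝒜 → Set (↥𝒜 ⊕ ℕ) := fun a => {Sum.inl a} ∪ Sum.inr '' ((a : Set ℕ) \ B)
  let 𝒰 : Set (Set (↥𝒜 ⊕ ℕ)) :=
    (Set.range V) ∪ (Set.range (fun n : ℕ => ({Sum.inr n} : Set (↥𝒜 ⊕ ℕ))))
  have hcover : @IsOpenCover (↥𝒜 ⊕ ℕ) (psiTop 𝒜) 𝒰 := by
    constructor
    · rintro u (⟨a, rfl⟩ | ⟨n, rfl⟩)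
      · intro a' ha'
        have haa : a' = a := by
          rcases ha' with h | ⟨m, _, hm⟩
          · exact Sum.inl.inj h
          · exact absurd hm (by simp)
        subst haa
        apply (hfin a' a'.2).subset
        rintro n ⟨hna, hns⟩
        refine ⟨?_, hna⟩
        by_contra hnB
        exact hns (Or.inr ⟨n, ⟨hna, hnB⟩, rfl⟩)
      · intro a ha
        simp at ha
    · apply Set.eq_univ_of_forall
      rintro (a | n)
      · exact ⟨V a, Or.inl ⟨a, rfl⟩, Or.inl rfl⟩
      · exact ⟨{Sum.inr n}, Or.inr ⟨n, rfl⟩, rfl⟩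
  have key : ∀ S : Set (↥𝒜 ⊕ ℕ), ∀ n ∈ B, Sum.inr n ∈ st S 𝒰 → Sum.inr n ∈ S := by
    intro S n hnB hst
    rcases hst with ⟨u, ⟨hu, hune⟩, hnu⟩
    rcases hu with ⟨a, rfl⟩ | ⟨m, rfl⟩
    · rcases hnu with hh | ⟨m, hm, heq⟩
      · simp [V] at hh
      · have : m = n := Sum.inr.inj heq
        subst this
        exact absurd hnB hm.2
    · rcases hune with ⟨x, hxu, hxS⟩
      have hx : x = Sum.inr m := hxu
      have hn : Sum.inr n = Sum.inr m := hnu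
      rw [hn, ← hx]
      exact hxS
  have keyIter : ∀ j : ℕ, ∀ S : Set (↥𝒜 ⊕ ℕ), ∀ n ∈ B,
      Sum.inr n ∈ iterSt j S 𝒰 → Sum.inr n ∈ S := by
    intro j
    induction j with
    | zero => intro S n _ hn; exact hn
    | succ j ih =>
      intro S n hnB hn
      exact ih S n hnB (key (iterSt j S 𝒰) n hnB hn)
  obtain ⟨W, hW𝒰, hWfin, hWst⟩ := h 𝒰 hcover
  have hmem : ∀ n ∈ B, ({Sum.inr n} : Set (↥𝒜 ⊕ ℕ)) ∈ W := by
    intro n hnB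
    have : Sum.inr n ∈ ⋃₀ W := by
      apply keyIter k (⋃₀ W) n hnB
      rw [hWst]; trivial
    rcases this with ⟨w, hwW, hnw⟩
    rcases hW𝒰 hwW with ⟨a, rfl⟩ | ⟨m, rfl⟩
    · rcases hnw with hh | ⟨m, hm, heq⟩
      · simp [V] at hh
      · have : m = n := Sum.inr.inj heq
        subst this
        exact absurd hnB hm.2
    · have : Sum.inr n = Sum.inr m := hnw
      rw [Sum.inr.inj this]
      exact hwW
  have himg : (fun n : ℕ => ({Sum.inr n} : Set (↥𝒜 ⊕ ℕ))) '' B ⊆ W := by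
    rintro _ ⟨n, hnB, rfl⟩
    exact hmem n hnB
  have hBfin : B.Finite := by
    apply Set.Finite.of_finite_image (hWfin.subset himg)
    intro m _ n _ hmn
    have := Set.singleton_eq_singleton_iff.mp hmn
    exact Sum.inr.inj this
  exact hB hBfin
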